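/- Let n ≥ 1 be an integer. For every f ∈ H², one has V_n f ∈ S_n² and ‖V_n f‖_{S_n²} ≤ 2 ‖f‖_{H²}; that is, V_n is a bounded linear operator from (H², ‖·‖_{H²}) into (S_n², ‖·‖_{S_n²}). -/

import Mathlib

open Metric Filter MeasureTheory intervalIntegral
open scoped ENNReal NNReal Topology Nat

/-- Taylor coefficient `a_k(f) = f^{(k)}(0)/k!`. -/
noncomputable def hardyCoeff (f : ℂ → ℂ) (k : ℕ) : ℂ :=
  iteratedDeriv k f 0 / (Nat.factorial k)

/-- `f ∈ H²`: analytic on the open unit disk with square-summable Taylor coefficients. -/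
def MemH2 (f : ℂ → ℂ) : Prop :=
  AnalyticOnNhd ℂ f (ball (0 : ℂ) 1) ∧ Summable fun k => ‖hardyCoeff f k‖ ^ 2

/-- The Hardy space norm `‖f‖_{H²}`. -/
noncomputable def normH2 (f : ℂ → ℂ) : ℝ :=
  Real.sqrt (∑' k, ‖hardyCoeff f k‖ ^ 2)

/-- `f ∈ S_n²`: `f ∈ H²` and `f^{(n)} ∈ H²`. -/
def MemS (n : ℕ) (f : ℂ → ℂ) : Prop :=
  MemH2 f ∧ MemH2 (iteratedDeriv n f)

/-- The norm `‖f‖_{S_n²} = (‖f^{(n)}‖² + ‖f‖²)^{1/2}`. -/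
noncomputable def normS (n : ℕ) (f : ℂ → ℂ) : ℝ :=
  Real.sqrt (normH2 (iteratedDeriv n f) ^ 2 + normH2 f ^ 2)

/-- `f ∈ ₀S_n²`: `f ∈ S_n²` with `f^{(i)}(0) = 0` for `0 ≤ i ≤ n-1`. -/
def Mem0S (n : ℕ) (f : ℂ → ℂ) : Prop :=
  MemS n f ∧ ∀ i < n, iteratedDeriv i f 0 = 0

/-- Complex Riemann–Liouville integral `V_n`. -/
noncomputable def Vn (n : ℕ) (f : ℂ → ℂ) (z : ℂ) : ℂ :=
  z ^ n / (Nat.factorial (n - 1)) *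
    ∫ t in (0:ℝ)..1, ((1 - t : ℝ) : ℂ) ^ (n - 1) * f ((t : ℂ) * z)

/-- The operator `T_n f = z f(z) + n ∫₀^z f(w) dw`. -/
noncomputable def Tn (n : ℕ) (f : ℂ → ℂ) (z : ℂ) : ℂ :=
  z * f z + n * (z * ∫ t in (0:ℝ)..1, f ((t : ℂ) * z))


lemma prodCast (k m : ℕ) : ∏ j ∈ Finset.range m, ((k:ℂ) + 1 + j) =
    (Nat.factorial (k+m)) / (Nat.factorial k) := by
  induction m with
  | zero => simp [div_self, Nat.cast_ne_zero.mpr (Nat.factorial_ne_zero k)]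
  | succ m ih =>
      rw [Finset.prod_range_succ, ih, Nat.add_succ, Nat.factorial_succ]
      push_cast
      field_simp
      ring

lemma betaNat (k m : ℕ) : ∫ t in (0:ℝ)..1, (t:ℂ)^k * ((1-t:ℝ):ℂ)^m =
    (Nat.factorial k) * (Nat.factorial m) / (Nat.factorial (k+m+1)) := by
  have h1 : 0 < Complex.re ((k:ℂ)+1) := by
    simp only [Complex.add_re, Complex.natCast_re, Complex.one_re]
    positivity
  have h := Complex.betaIntegral_eval_nat_add_one_right h1 m
  rw [Complex.betaIntegral] at h
  have heq : ∀ x : ℝ, (x:ℂ) ^ ((k:ℂ)+1-1) * (1-(x:ℂ)) ^ ((m:ℂ)+1-1) =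
      (x:ℂ)^k * ((1-x:ℝ):ℂ)^m := by
    intro x
    push_cast
    rw [add_sub_cancel_right, add_sub_cancel_right, Complex.cpow_natCast, Complex.cpow_natCast]
  rw [intervalIntegral.integral_congr (fun x _ => heq x)] at h
  rw [h, prodCast]
  have hk : ((Nat.factorial k : ℂ)) ≠ 0 := Nat.cast_ne_zero.mpr (Nat.factorial_ne_zero k)
  have hkm : ((Nat.factorial (k+m+1) : ℂ)) ≠ 0 := Nat.cast_ne_zero.mpr (Nat.factorial_ne_zero _)
  rw [show k + (m+1) = k+m+1 from by ring]
  field_simp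

lemma coeff_eq_hardy {f : ℂ → ℂ} {p : FormalMultilinearSeries ℂ ℂ ℂ} {r : ℝ≥0∞}
    (h : HasFPowerSeriesOnBall f p 0 r) (k : ℕ) : p.coeff k = hardyCoeff f k := by
  have h2 := h.factorial_smul (y := (1:ℂ)) k
  rw [FormalMultilinearSeries.apply_eq_pow_smul_coeff, one_pow, one_smul] at h2
  rw [hardyCoeff, iteratedDeriv_eq_iteratedFDeriv, ← h2, nsmul_eq_mul]
  field_simp [Nat.factorial_ne_zero]

lemma hasSum_hardy {f : ℂ → ℂ} (hf : AnalyticOnNhd ℂ f (ball (0:ℂ) 1)) {z : ℂ}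
    (hz : z ∈ ball (0:ℂ) 1) : HasSum (fun k => hardyCoeff f k * z ^ k) (f z) := by
  rw [mem_ball_zero_iff] at hz
  set r : ℝ := (‖z‖ + 1) / 2 with hr
  have hzr : ‖z‖ < r := by rw [hr]; linarith
  have hr0 : 0 < r := lt_of_le_of_lt (norm_nonneg z) hzr
  have hr1 : r < 1 := by rw [hr]; linarith
  set R : ℝ≥0 := r.toNNReal with hR
  have hRr : (R : ℝ) = r := Real.coe_toNNReal r hr0.le
  have hd : DifferentiableOn ℂ f (closedBall (0:ℂ) R) := by
    apply (hf.mono ?_).differentiableOn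
    rw [hRr]
    exact closedBall_subset_ball hr1
  have hR0 : 0 < R := by rwa [← Real.toNNReal_pos] at hr0
  have h := hd.hasFPowerSeriesOnBall hR0
  have hzR : z ∈ Metric.eball (0:ℂ) R := by
    rw [EMetric.mem_ball, edist_zero_right, enorm_eq_nnnorm, ENNReal.coe_lt_coe,
      ← NNReal.coe_lt_coe, coe_nnnorm, hRr]
    exact hzr
  have hs := h.hasSum hzR
  simp only [FormalMultilinearSeries.apply_eq_pow_smul_coeff, smul_eq_mul, zero_add] at hs
  convert hs using 2 with k
  case e'_3 => rfl
  rw [coeff_eq_hardy h, mul_comm]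

lemma iteratedDeriv_comp (k m : ℕ) (f : ℂ → ℂ) :
    iteratedDeriv k (iteratedDeriv m f) = iteratedDeriv (k + m) f := by
  induction m generalizing f with
  | zero => simp [iteratedDeriv_zero]
  | succ m ih =>
      rw [iteratedDeriv_succ', ih (deriv f), ← iteratedDeriv_succ']
      congr 1

lemma vn_hasSum (n : ℕ) (hn : 1 ≤ n) {f : ℂ → ℂ} (hA : AnalyticOnNhd ℂ f (ball (0:ℂ) 1))
    {M : ℝ} (hM : ∀ k, ‖hardyCoeff f k‖ ≤ M) {z : ℂ} (hz : z ∈ ball (0:ℂ) 1) :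
    HasSum (fun k => hardyCoeff f k * ((Nat.factorial k : ℂ) / (Nat.factorial (k+n) : ℂ))
      * z ^ (k+n)) (Vn n f z) := by
  set a := hardyCoeff f with ha
  have hz1 : ‖z‖ < 1 := mem_ball_zero_iff.mp hz
  set F : ℕ → ℝ → ℂ := fun k t => ((1-t:ℝ):ℂ)^(n-1) * (a k * ((t:ℂ)*z)^k) with hF
  have hcont : ∀ k, Continuous (F k) := by
    intro k
    apply Continuous.mul
    · exact (Complex.continuous_ofReal.comp (continuous_const.sub continuous_id)).pow _
    · exact continuous_const.mul ((Complex.continuous_ofReal.mul continuous_const).pow k)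
  have hInt : ∀ k, Integrable (F k) (MeasureTheory.volume.restrict (Set.Ioc (0:ℝ) 1)) :=
    fun k => (hcont k).integrableOn_Ioc
  have hFle : ∀ k, ∀ t ∈ Set.Ioc (0:ℝ) 1, ‖F k t‖ ≤ M * ‖z‖^k := by
    intro k t ht
    rw [hF]
    show ‖_ * (a k * _)‖ ≤ _
    rw [norm_mul, norm_mul, norm_pow, norm_pow]
    have h1 : ‖((1-t:ℝ):ℂ)‖ ≤ 1 := by
      rw [Complex.norm_real, Real.norm_eq_abs, abs_le]
      constructor <;> [linarith [ht.2]; linarith [ht.1]]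
    have h2 : ‖(t:ℂ)*z‖ ≤ ‖z‖ := by
      rw [norm_mul, Complex.norm_real, Real.norm_eq_abs, abs_of_pos ht.1]
      nlinarith [norm_nonneg z, ht.1, ht.2]
    calc ‖((1-t:ℝ):ℂ)‖^(n-1) * (‖a k‖ * ‖(t:ℂ)*z‖^k)
        ≤ 1^(n-1) * (M * ‖z‖^k) := by
          apply mul_le_mul (pow_le_pow_left₀ (norm_nonneg _) h1 _)
            (mul_le_mul (hM k) (pow_le_pow_left₀ (norm_nonneg _) h2 _)
              (by positivity) ((norm_nonneg (a k)).trans (hM k)))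
            (by positivity) (by positivity)
      _ = M * ‖z‖^k := by rw [one_pow, one_mul]
  have hnorm_sum : Summable fun k => ∫ t, ‖F k t‖ ∂(MeasureTheory.volume.restrict (Set.Ioc (0:ℝ) 1)) := by
    apply Summable.of_nonneg_of_le (fun k => MeasureTheory.integral_nonneg (fun t => norm_nonneg _))
      (fun k => ?_) ((summable_geometric_of_lt_one (norm_nonneg z) hz1).mul_left M)
    calc (∫ t, ‖F k t‖ ∂(MeasureTheory.volume.restrict (Set.Ioc (0:ℝ) 1)))
        ≤ ∫ t, M * ‖z‖^k ∂(MeasureTheory.volume.restrict (Set.Ioc (0:ℝ) 1)) := by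
          apply MeasureTheory.setIntegral_mono_on (hInt k).norm
            (MeasureTheory.integrableOn_const measure_Ioc_lt_top.ne)
            measurableSet_Ioc (hFle k)
      _ = M * ‖z‖^k := by
          rw [MeasureTheory.setIntegral_const, Real.volume_real_Ioc, smul_eq_mul]
          norm_num
  have key := MeasureTheory.hasSum_integral_of_summable_integral_norm hInt hnorm_sum
  -- identify the integral of the tsum
  have htz : ∀ t ∈ Set.Ioc (0:ℝ) 1, HasSum (fun k => F k t) (((1-t:ℝ):ℂ)^(n-1) * f ((t:ℂ)*z)) := by
    intro t ht
    apply HasSum.mul_left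
    apply hasSum_hardy hA
    rw [mem_ball_zero_iff]
    calc ‖(t:ℂ)*z‖ = t * ‖z‖ := by
          rw [norm_mul, Complex.norm_real, Real.norm_eq_abs, abs_of_pos ht.1]
      _ ≤ 1 * ‖z‖ := by nlinarith [norm_nonneg z, ht.2]
      _ < 1 := by rwa [one_mul]
  have hIeq : (∫ t, (∑' k, F k t) ∂(MeasureTheory.volume.restrict (Set.Ioc (0:ℝ) 1)))
      = ∫ t in (0:ℝ)..1, ((1-t:ℝ):ℂ)^(n-1) * f ((t:ℂ)*z) := by
    rw [intervalIntegral.integral_of_le zero_le_one]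
    apply MeasureTheory.setIntegral_congr_fun measurableSet_Ioc
    intro t ht
    exact (htz t ht).tsum_eq
  rw [hIeq] at key
  -- compute each integral
  have hterm : ∀ k, (∫ t, F k t ∂(MeasureTheory.volume.restrict (Set.Ioc (0:ℝ) 1)))
      = a k * z^k * ((Nat.factorial k : ℂ) * (Nat.factorial (n-1) : ℂ) / (Nat.factorial (k+n) : ℂ)) := by
    intro k
    rw [← intervalIntegral.integral_of_le zero_le_one]
    have : ∀ t : ℝ, F k t = (a k * z^k) * ((t:ℂ)^k * ((1-t:ℝ):ℂ)^(n-1)) := by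
      intro t; rw [hF]; ring
    rw [intervalIntegral.integral_congr (fun t _ => this t), intervalIntegral.integral_const_mul,
      betaNat]
    have : k + (n-1) + 1 = k + n := by omega
    rw [this]
  simp_rw [hterm] at key
  -- multiply by z^n / (n-1)!
  have key2 := key.mul_left ((z^n : ℂ) / (Nat.factorial (n-1) : ℂ))
  rw [Vn]
  convert key2 using 2 with k
  case e'_3 => rfl
  have hfac : ((Nat.factorial (n-1) : ℂ)) ≠ 0 := Nat.cast_ne_zero.mpr (Nat.factorial_ne_zero _)
  have hkn : ((Nat.factorial (k+n) : ℂ)) ≠ 0 := Nat.cast_ne_zero.mpr (Nat.factorial_ne_zero _)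
  rw [pow_add]
  field_simp

lemma mem_eball_one {z : ℂ} (hz : z ∈ ball (0:ℂ) 1) : z ∈ Metric.eball (0:ℂ) 1 := by
  rw [mem_ball_zero_iff] at hz
  rw [EMetric.mem_ball, edist_zero_right, enorm_eq_nnnorm]
  exact_mod_cast (by rwa [← coe_nnnorm, NNReal.coe_lt_one] at hz : ‖z‖₊ < 1)

/-- For `n ≥ 1` and `f ∈ H²`, `V_n f ∈ S_n²` and `‖V_n f‖_{S_n²} ≤ 2‖f‖_{H²}`,
i.e. `V_n` is bounded from `H²` into `S_n²`. -/
theorem stmt10 (n : ℕ) (hn : 1 ≤ n) (f : ℂ → ℂ) (hf : MemH2 f) :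
    MemS n (Vn n f) ∧ normS n (Vn n f) ≤ 2 * normH2 f := by
  obtain ⟨hA, hSum⟩ := hf
  set a := hardyCoeff f with ha
  set S := ∑' k, ‖a k‖^2 with hS
  have hSnn : 0 ≤ S := tsum_nonneg (fun k => sq_nonneg _)
  set M := Real.sqrt S with hMdef
  have hM : ∀ k, ‖a k‖ ≤ M := by
    intro k
    have h1 : ‖a k‖^2 ≤ S := Summable.le_tsum hSum k (fun _ _ => sq_nonneg _)
    calc ‖a k‖ = Real.sqrt (‖a k‖^2) := (Real.sqrt_sq (norm_nonneg _)).symm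
      _ ≤ M := Real.sqrt_le_sqrt h1
  set c : ℕ → ℂ := fun j => if j < n then 0 else
    a (j-n) * ((Nat.factorial (j-n) : ℂ) / (Nat.factorial j : ℂ)) with hc
  have hcn : ∀ k, c (k+n) = a k * ((Nat.factorial k : ℂ) / (Nat.factorial (k+n) : ℂ)) := by
    intro k
    have h1 : ¬ (k + n < n) := by omega
    simp only [hc, h1, if_false, Nat.add_sub_cancel]
  have hcle : ∀ j, ‖c j‖ ≤ ‖a (j-n)‖ := by
    intro j
    by_cases hj : j < n
    · simp [hc, hj]
    · simp only [hc, hj, if_false, norm_mul]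
      have h2 : ‖((Nat.factorial (j-n) : ℂ) / (Nat.factorial j : ℂ))‖ ≤ 1 := by
        rw [norm_div, Complex.norm_natCast, Complex.norm_natCast, div_le_one
          (by exact_mod_cast Nat.factorial_pos j)]
        exact_mod_cast Nat.factorial_le (by omega)
      exact (mul_le_of_le_one_right (norm_nonneg _) h2)
  have hcM : ∀ j, ‖c j‖ ≤ M := fun j => (hcle j).trans (hM _)
  set q := FormalMultilinearSeries.ofScalars ℂ c with hq
  have hrad : (1:ℝ≥0∞) ≤ q.radius := by
    have := q.le_radius_of_bound M (r := 1) (fun j => by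
      rw [hq, FormalMultilinearSeries.ofScalars_norm]
      simpa using hcM j)
    simpa using this
  have hq0 : (0:ℝ≥0∞) < q.radius := lt_of_lt_of_le one_pos hrad
  have hball : HasFPowerSeriesOnBall q.sum q 0 1 :=
    (q.hasFPowerSeriesOnBall hq0).mono one_pos hrad
  set g := q.sum with hg
  have hgz : ∀ z ∈ ball (0:ℂ) 1, HasSum (fun j => c j * z^j) (g z) := by
    intro z hz
    have h1 := hball.hasSum (mem_eball_one hz)
    simp only [zero_add] at h1
    convert h1 using 2 with j
    case e'_3 => rfl
    rw [hq, FormalMultilinearSeries.ofScalars_apply_eq, smul_eq_mul, mul_comm]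
  have hqc : ∀ j, q.coeff j = c j := by
    intro j
    have := FormalMultilinearSeries.ofScalars_apply_eq (E := ℂ) c 1 j
    rw [one_pow, smul_eq_mul, mul_one] at this
    exact this
  have hEq : Set.EqOn (Vn n f) g (ball (0:ℂ) 1) := by
    intro z hz
    have h1 := vn_hasSum n hn hA hM hz
    have hinj : Function.Injective (fun k : ℕ => k + n) := add_left_injective n
    have hzero : ∀ j ∉ Set.range (fun k : ℕ => k + n), c j * z^j = 0 := by
      intro j hj
      have : j < n := by
        by_contra h
        exact hj ⟨j - n, by show j - n + n = j; omega⟩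
      simp [hc, this]
    have h3 := (hinj.hasSum_iff hzero).mpr (hgz z hz)
    apply h1.unique
    have h4 : ((fun j => c j * z ^ j) ∘ fun k => k + n)
        = fun k => a k * ((Nat.factorial k : ℂ) / (Nat.factorial (k+n) : ℂ)) * z ^ (k+n) := by
      funext k
      simp only [Function.comp_apply, hcn k]
    rwa [h4] at h3
  have hgA : AnalyticOnNhd ℂ g (ball (0:ℂ) 1) :=
    fun z hz => hball.analyticAt_of_mem (mem_eball_one hz)
  have hVA : AnalyticOnNhd ℂ (Vn n f) (ball (0:ℂ) 1) := by
    intro z hz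
    exact (hgA z hz).congr ((hEq.eventuallyEq_of_mem (isOpen_ball.mem_nhds hz)).symm)
  have hmem0 : (0:ℂ) ∈ ball (0:ℂ) 1 := mem_ball_self one_pos
  have hVg_ev : Vn n f =ᶠ[nhds (0:ℂ)] g := hEq.eventuallyEq_of_mem (isOpen_ball.mem_nhds hmem0)
  have hgcoeff : ∀ j, hardyCoeff g j = c j := fun j => (coeff_eq_hardy hball j).symm.trans (hqc j)
  have hVcoeff : ∀ j, hardyCoeff (Vn n f) j = c j := by
    intro j
    rw [hardyCoeff, hVg_ev.iteratedDeriv_eq j, ← hardyCoeff, hgcoeff]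
  -- summability for Vn
  set e : ℕ → ℝ := fun j => if j < n then 0 else ‖a (j-n)‖^2 with he
  have he_shift : ∀ k, e (k+n) = ‖a k‖^2 := by
    intro k
    have h1 : ¬ (k + n < n) := by omega
    simp only [he, h1, if_false, Nat.add_sub_cancel]
  have hesum : Summable e := by
    apply (summable_nat_add_iff n).mp
    simpa only [he_shift] using hSum
  have hce : ∀ j, ‖c j‖^2 ≤ e j := by
    intro j
    by_cases hj : j < n
    · simp [hc, he, hj]
    · simp only [he, hj, if_false]
      exact pow_le_pow_left₀ (norm_nonneg _) (hcle j) 2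
  have hVsum : Summable (fun j => ‖c j‖^2) :=
    hesum.of_nonneg_of_le (fun j => sq_nonneg _) hce
  have htsum_e : ∑' j, e j = S := by
    rw [← Summable.sum_add_tsum_nat_add n hesum]
    have h0 : ∑ i ∈ Finset.range n, e i = 0 := by
      apply Finset.sum_eq_zero
      intro i hi
      simp [he, Finset.mem_range.mp hi]
    simp only [he_shift, h0, zero_add, ← hS]
  have htsum_le : ∑' j, ‖c j‖^2 ≤ S := htsum_e ▸ Summable.tsum_le_tsum hce hVsum hesum
  -- the n-th derivative
  have hgA' : AnalyticOnNhd ℂ (iteratedDeriv n g) (ball (0:ℂ) 1) := by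
    rw [iteratedDeriv_eq_iterate]
    exact hgA.iterated_deriv n
  have hDEq : Set.EqOn (iteratedDeriv n (Vn n f)) (iteratedDeriv n g) (ball (0:ℂ) 1) :=
    hEq.iteratedDeriv_of_isOpen isOpen_ball n
  have hDA : AnalyticOnNhd ℂ (iteratedDeriv n (Vn n f)) (ball (0:ℂ) 1) := by
    intro z hz
    exact (hgA' z hz).congr ((hDEq.eventuallyEq_of_mem (isOpen_ball.mem_nhds hz)).symm)
  have hDcoeff : ∀ k, hardyCoeff (iteratedDeriv n (Vn n f)) k = a k := by
    intro k
    rw [hardyCoeff,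
      ((hDEq.eventuallyEq_of_mem (isOpen_ball.mem_nhds hmem0))).iteratedDeriv_eq k,
      iteratedDeriv_comp k n g]
    have h1 : hardyCoeff g (k+n) = c (k+n) := hgcoeff (k+n)
    rw [hardyCoeff] at h1
    have hkf : ((Nat.factorial k : ℂ)) ≠ 0 := Nat.cast_ne_zero.mpr (Nat.factorial_ne_zero _)
    have hknf : ((Nat.factorial (k+n) : ℂ)) ≠ 0 := Nat.cast_ne_zero.mpr (Nat.factorial_ne_zero _)
    have h2 : iteratedDeriv (k+n) g 0 = (Nat.factorial (k+n) : ℂ) * c (k+n) := by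
      rw [← h1, ← mul_div_assoc, mul_div_cancel_left₀ _ hknf]
    rw [h2, hcn k]
    field_simp
  have hDsum : Summable (fun k => ‖hardyCoeff (iteratedDeriv n (Vn n f)) k‖^2) := by
    simpa only [hDcoeff] using hSum
  have hVsum' : Summable (fun j => ‖hardyCoeff (Vn n f) j‖^2) := by
    simpa only [hVcoeff] using hVsum
  refine ⟨⟨⟨hVA, hVsum'⟩, ⟨hDA, hDsum⟩⟩, ?_⟩
  -- norm bound
  have hnf : normH2 f = Real.sqrt S := by rw [normH2]
  have hnV : normH2 (Vn n f) ^ 2 ≤ S := by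
    rw [normH2, Real.sq_sqrt (tsum_nonneg (fun j => sq_nonneg _))]
    calc ∑' j, ‖hardyCoeff (Vn n f) j‖^2 = ∑' j, ‖c j‖^2 := by simp_rw [hVcoeff]
      _ ≤ S := htsum_le
  have hnD : normH2 (iteratedDeriv n (Vn n f)) ^ 2 = S := by
    rw [normH2, Real.sq_sqrt (tsum_nonneg (fun j => sq_nonneg _))]
    simp_rw [hDcoeff]
    rfl
  rw [normS, hnf, hnD]
  calc Real.sqrt (S + normH2 (Vn n f) ^ 2) ≤ Real.sqrt (S + S) :=
        Real.sqrt_le_sqrt (by linarith)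
    _ ≤ Real.sqrt (4 * S) := Real.sqrt_le_sqrt (by linarith)
    _ = 2 * Real.sqrt S := by
        rw [show (4:ℝ) * S = 2^2 * S by ring, Real.sqrt_mul (by positivity),
          Real.sqrt_sq (by norm_num)]
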